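/- Consider the mass-action system with inflows and unit outflows for the network {A+B → P, B+C → Q, C → 2A}: r_A = i_A - c_A - k_1 c_A c_B + 2 k_3 c_C, r_B = i_B - c_B - k_1 c_A c_B - k_2 c_B c_C, r_C = i_C - c_C - k_2 c_B c_C - k_3 c_C, r_P = i_P - c_P + k_1 c_A c_B, r_Q = i_Q - c_Q + k_2 c_B c_C, where k_1 = k_{A+B→P}, k_2 = k_{B+C→Q}, k_3 = k_{C→2A}. Then det(∂r/∂c) = -1 - k_1 c_A - k_2 c_C - k_2 c_B - k_1 k_2 c_A c_B - k_3 - k_1 k_3 c_A - k_2 k_3 c_C - k_1 c_B - k_1 k_3 c_B - k_1 k_2 c_B² - k_1 k_2 c_B c_C + k_1 k_2 k_3 c_B c_C. -/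

import Mathlib

set_option maxHeartbeats 2000000 in
theorem stmt_17 (k1 k2 k3 iA iB iC iP iQ : ℝ)
    (hk1 : 0 < k1) (hk2 : 0 < k2) (hk3 : 0 < k3)
    (hiA : 0 < iA) (hiB : 0 < iB) (hiC : 0 < iC) (hiP : 0 < iP) (hiQ : 0 < iQ)
    (c : Fin 5 → ℝ) (hc : ∀ i, 0 < c i) :
    (Matrix.of fun i j : Fin 5 =>
      fderiv ℝ (fun x : Fin 5 → ℝ =>
        (![iA - x 0 - k1 * x 0 * x 1 + 2 * k3 * x 2,
           iB - x 1 - k1 * x 0 * x 1 - k2 * x 1 * x 2,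
           iC - x 2 - k2 * x 1 * x 2 - k3 * x 2,
           iP - x 3 + k1 * x 0 * x 1,
           iQ - x 4 + k2 * x 1 * x 2] : Fin 5 → ℝ) i) c
        (Pi.single j (1 : ℝ))).det =
      -1 - k1 * c 0 - k2 * c 2 - k2 * c 1 - k1 * k2 * c 0 * c 1 - k3
        - k1 * k3 * c 0 - k2 * k3 * c 2 - k1 * c 1 - k1 * k3 * c 1
        - k1 * k2 * c 1 ^ 2 - k1 * k2 * c 1 * c 2 + k1 * k2 * k3 * c 1 * c 2 := by
  have p : ∀ i : Fin 5, HasFDerivAt (fun x : Fin 5 → ℝ => x i)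
      ((ContinuousLinearMap.proj i : (Fin 5 → ℝ) →L[ℝ] ℝ)) c := by intro i; exact hasFDerivAt_apply i c
  have h0 : HasFDerivAt (fun x : Fin 5 → ℝ => iA - x 0 - k1 * x 0 * x 1 + 2 * k3 * x 2) _ c :=
    (((hasFDerivAt_const iA c).sub (p 0)).sub (((p 0).const_mul k1).mul (p 1))).add
      ((p 2).const_mul (2 * k3))
  have h1 : HasFDerivAt (fun x : Fin 5 → ℝ => iB - x 1 - k1 * x 0 * x 1 - k2 * x 1 * x 2) _ c :=
    ((((hasFDerivAt_const iB c).sub (p 1)).sub (((p 0).const_mul k1).mul (p 1))).sub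
      (((p 1).const_mul k2).mul (p 2)))
  have h2 : HasFDerivAt (fun x : Fin 5 → ℝ => iC - x 2 - k2 * x 1 * x 2 - k3 * x 2) _ c :=
    ((((hasFDerivAt_const iC c).sub (p 2)).sub (((p 1).const_mul k2).mul (p 2))).sub
      ((p 2).const_mul k3))
  have h3 : HasFDerivAt (fun x : Fin 5 → ℝ => iP - x 3 + k1 * x 0 * x 1) _ c :=
    (((hasFDerivAt_const iP c).sub (p 3)).add (((p 0).const_mul k1).mul (p 1)))
  have h4 : HasFDerivAt (fun x : Fin 5 → ℝ => iQ - x 4 + k2 * x 1 * x 2) _ c :=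
    (((hasFDerivAt_const iQ c).sub (p 4)).add (((p 1).const_mul k2).mul (p 2)))
  have E : (Matrix.of fun i j : Fin 5 =>
      fderiv ℝ (fun x : Fin 5 → ℝ =>
        (![iA - x 0 - k1 * x 0 * x 1 + 2 * k3 * x 2,
           iB - x 1 - k1 * x 0 * x 1 - k2 * x 1 * x 2,
           iC - x 2 - k2 * x 1 * x 2 - k3 * x 2,
           iP - x 3 + k1 * x 0 * x 1,
           iQ - x 4 + k2 * x 1 * x 2] : Fin 5 → ℝ) i) c
        (Pi.single j (1 : ℝ))) =
      !![-1 - k1 * c 1, -(k1 * c 0), 2 * k3, 0, 0;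
         -(k1 * c 1), -1 - k1 * c 0 - k2 * c 2, -(k2 * c 1), 0, 0;
         0, -(k2 * c 2), -1 - k2 * c 1 - k3, 0, 0;
         k1 * c 1, k1 * c 0, 0, -1, 0;
         0, k2 * c 2, k2 * c 1, 0, -1] := by
    ext i j
    fin_cases i
    · show fderiv ℝ (fun x : Fin 5 → ℝ => iA - x 0 - k1 * x 0 * x 1 + 2 * k3 * x 2) c (Pi.single j (1:ℝ)) = _
      rw [h0.fderiv]
      fin_cases j <;>
        simp [ContinuousLinearMap.proj_apply, Pi.single_apply] <;> ring
    · show fderiv ℝ (fun x : Fin 5 → ℝ => iB - x 1 - k1 * x 0 * x 1 - k2 * x 1 * x 2) c (Pi.single j (1:ℝ)) = _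
      rw [h1.fderiv]
      fin_cases j <;>
        simp [ContinuousLinearMap.proj_apply, Pi.single_apply] <;> ring
    · show fderiv ℝ (fun x : Fin 5 → ℝ => iC - x 2 - k2 * x 1 * x 2 - k3 * x 2) c (Pi.single j (1:ℝ)) = _
      rw [h2.fderiv]
      fin_cases j <;>
        simp [ContinuousLinearMap.proj_apply, Pi.single_apply] <;> ring
    · show fderiv ℝ (fun x : Fin 5 → ℝ => iP - x 3 + k1 * x 0 * x 1) c (Pi.single j (1:ℝ)) = _
      rw [h3.fderiv]
      fin_cases j <;>
        simp [ContinuousLinearMap.proj_apply, Pi.single_apply] <;> ring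
    · show fderiv ℝ (fun x : Fin 5 → ℝ => iQ - x 4 + k2 * x 1 * x 2) c (Pi.single j (1:ℝ)) = _
      rw [h4.fderiv]
      fin_cases j <;>
        simp [ContinuousLinearMap.proj_apply, Pi.single_apply] <;> ring
  rw [E]
  simp [Matrix.det_succ_row_zero, Fin.sum_univ_succ, Fin.succAbove, Matrix.submatrix_apply]
  ring
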